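/- Let R be a commutative noetherian local ring with a unique associated prime (coprimary), and let I be a nonzero ideal of R regarded as an R-module. Then ldim_R I = dim_R I = dim R. -/

import Mathlib

open IsLocalRing CategoryTheory

/-- Krull dimension of a module: the Krull dimension of its support. -/
noncomputable def mdim (R : Type*) [CommRing R] (M : Type*) [AddCommGroup M] [Module R M] :
    WithBot ℕ∞ :=
  Order.krullDim (Module.support R M)

/-- The little dimension of a module over a local ring:
`ldim_R M = inf { dim_R (Rx) : x ∈ M \ mM }` (infimum over the empty set is `⊤`). -/
noncomputable def ldim (R : Type*) [CommRing R] [IsLocalRing R] (M : Type*) [AddCommGroup M]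
    [Module R M] : WithBot ℕ∞ :=
  ⨅ x : {x : M // x ∉ (maximalIdeal R • ⊤ : Submodule R M)},
    mdim R (Submodule.span R {x.1})

/-- Depth of a module over a local ring: the supremum of lengths of regular sequences on `M`
consisting of elements of the maximal ideal. -/
noncomputable def mdepth (R : Type*) [CommRing R] [IsLocalRing R] (M : Type*) [AddCommGroup M]
    [Module R M] : ℕ∞ :=
  sSup {n : ℕ∞ | ∃ rs : List R, (rs.length : ℕ∞) = n ∧ (∀ r ∈ rs, r ∈ maximalIdeal R) ∧
    RingTheory.Sequence.IsRegular M rs}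

/-- Every minimal prime of a noetherian ring is an associated prime. -/
lemma min_mem_assoc {R : Type*} [CommRing R] [IsNoetherianRing R] {q : Ideal R}
    (hq : q ∈ minimalPrimes R) : q ∈ associatedPrimes R R := by
  have hqp : q.IsPrime := hq.1.1
  set L := Localization.AtPrime q with hL
  have : IsNoetherianRing L :=
    IsLocalization.isNoetherianRing q.primeCompl L inferInstance
  obtain ⟨P, hP⟩ := associatedPrimes.nonempty L L
  obtain ⟨hPprime, z, hz⟩ := isAssociatedPrime_iff.mp hP
  have hPmax : P = IsLocalRing.maximalIdeal L :=
    congrArg PrimeSpectrum.asIdeal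
      ((IsLocalization.subsingleton_primeSpectrum_of_mem_minimalPrimes q hq L).elim
        ⟨P, hPprime⟩ ⟨_, (IsLocalRing.maximalIdeal.isMaximal L).isPrime⟩)
  obtain ⟨⟨r, s⟩, hrs⟩ := IsLocalization.mk'_surjective q.primeCompl z
  -- Fact A : for c : L, c * z = 0 ↔ c * algebraMap r = 0
  have hspec : z * algebraMap R L s = algebraMap R L r := by
    rw [← hrs]; exact IsLocalization.mk'_spec L r s
  have hsu : IsUnit (algebraMap R L s) := IsLocalization.map_units L s
  have factA : ∀ c : L, c * z = 0 ↔ c * algebraMap R L r = 0 := by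
    intro c
    constructor
    · intro h; rw [← hspec, ← mul_assoc, h, zero_mul]
    · intro h
      have h5 : algebraMap R L s * (c * z) = 0 := by
        rw [mul_comm]; rw [mul_assoc, hspec, h]
      exact hsu.mul_right_eq_zero.mp h5
  -- membership in P
  have hmemP : ∀ c : L, c ∈ P ↔ c * z = 0 := by
    intro c
    rw [hz, Submodule.mem_colon_singleton, smul_eq_mul, Submodule.mem_bot]
  -- generators of q
  obtain ⟨S, hS⟩ := IsNoetherian.noetherian q
  have hgen : ∀ a ∈ S, ∃ m : q.primeCompl, (m : R) * (a * r) = 0 := by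
    intro a ha
    have haq : a ∈ q := hS ▸ Submodule.subset_span ha
    have h1 : algebraMap R L a ∈ IsLocalRing.maximalIdeal L := by
      rw [← Localization.AtPrime.map_eq_maximalIdeal]
      exact Ideal.mem_map_of_mem _ haq
    have h2 : algebraMap R L a * z = 0 := (hmemP _).mp (hPmax ▸ h1)
    have h3 : algebraMap R L a * algebraMap R L r = 0 := (factA _).mp h2
    rw [← map_mul] at h3
    exact (IsLocalization.map_eq_zero_iff q.primeCompl L _).mp h3
  classical
  choose f hf using hgen
  set t : R := ∏ a ∈ S.attach, (f a.1 a.2 : R) with ht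
  have htc : t ∈ q.primeCompl := Submonoid.prod_mem _ (fun a _ => (f a.1 a.2).2)
  refine isAssociatedPrime_iff.mpr ⟨hqp, t * r, ?_⟩
  apply le_antisymm
  · -- q ≤ annihilator
    rw [← hS, Submodule.span_le]
    intro a ha
    rw [SetLike.mem_coe, Submodule.mem_colon_singleton, smul_eq_mul, Submodule.mem_bot]
    have hmem : (⟨a, ha⟩ : {x // x ∈ S}) ∈ S.attach := Finset.mem_attach _ _
    have hdec : t = (f a ha : R) * ∏ b ∈ S.attach.erase ⟨a, ha⟩, (f b.1 b.2 : R) :=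
      (Finset.mul_prod_erase _ _ hmem).symm
    set u : R := ∏ b ∈ S.attach.erase ⟨a, ha⟩, (f b.1 b.2 : R)
    rw [hdec]
    linear_combination u * hf a ha
  · -- annihilator ≤ q
    intro c hc
    rw [Submodule.mem_colon_singleton, smul_eq_mul, Submodule.mem_bot] at hc
    have h1 : algebraMap R L (c * (t * r)) = 0 := by rw [hc, map_zero]
    rw [map_mul, map_mul] at h1
    have htu : IsUnit (algebraMap R L t) := IsLocalization.map_units L ⟨t, htc⟩
    have h2 : algebraMap R L c * algebraMap R L r = 0 := by
      have : algebraMap R L t * (algebraMap R L c * algebraMap R L r) = 0 := by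
        rw [← h1]; ring
      exact (htu.mul_right_eq_zero).mp this
    have h3 : algebraMap R L c * z = 0 := (factA _).mpr h2
    have h4 : algebraMap R L c ∈ IsLocalRing.maximalIdeal L := hPmax ▸ (hmemP _).mpr h3
    have := Localization.AtPrime.comap_maximalIdeal (I := q)
    rw [← this]
    exact Ideal.mem_comap.mpr h4

/-- If `R` is coprimary, any nontrivial module embedding into `R` has full support,
hence its dimension is the Krull dimension of `R`. -/
lemma mdim_eq_of_inj {R : Type*} [CommRing R] [IsNoetherianRing R]
    (hcop : ∃! p : Ideal R, p ∈ associatedPrimes R R)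
    {M : Type*} [AddCommGroup M] [Module R M] [Nontrivial M]
    (f : M →ₗ[R] R) (hf : Function.Injective f) :
    mdim R M = ringKrullDim R := by
  obtain ⟨p, hp, hup⟩ := hcop
  -- p is contained in every prime
  have hple : ∀ J : Ideal R, J.IsPrime → p ≤ J := by
    intro J hJ
    obtain ⟨q, hq, hqJ⟩ := Ideal.exists_minimalPrimes_le (J := J) bot_le
    have : q ∈ associatedPrimes R R := min_mem_assoc hq
    rw [hup q this] at hqJ
    exact hqJ
  -- p is an associated prime of M
  obtain ⟨P, hP⟩ := associatedPrimes.nonempty R M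
  have hPp : P = p := hup P (associatedPrimes.subset_of_injective hf hP)
  subst hPp
  obtain ⟨hPprime, x, hx⟩ := isAssociatedPrime_iff.mp hP
  have hsupp : Module.support R M = Set.univ := by
    ext J
    simp only [Set.mem_univ, iff_true, Module.mem_support_iff_exists_annihilator]
    exact ⟨x, fun r hr => hple J.asIdeal J.isPrime (by
      rw [hx, Submodule.mem_colon_singleton, Submodule.mem_bot]
      exact (Submodule.mem_annihilator_span_singleton x r).mp hr)⟩
  rw [mdim, hsupp, ringKrullDim]
  exact Order.krullDim_eq_of_orderIso OrderIso.Set.univ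

/-- if `R` is coprimary (a unique associated prime) and `I` is a nonzero
ideal, then `ldim_R I = dim_R I = dim R`. -/
theorem stmt_6 (R : Type*) [CommRing R] [IsLocalRing R] [IsNoetherianRing R]
    (hcop : ∃! p : Ideal R, p ∈ associatedPrimes R R)
    (I : Ideal R) (hI : I ≠ ⊥) :
    ldim R I = mdim R I ∧ mdim R I = ringKrullDim R := by
  have hntI : Nontrivial ↥I := Submodule.nontrivial_iff_ne_bot.mpr hI
  have hmdimI : mdim R ↥I = ringKrullDim R :=
    mdim_eq_of_inj hcop I.subtype (Submodule.injective_subtype I)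
  -- Nakayama: there is an element outside `m • I`
  have hne : Nonempty {x : ↥I // x ∉ (maximalIdeal R • ⊤ : Submodule R ↥I)} := by
    by_contra h
    rw [not_nonempty_iff] at h
    have hall : (⊤ : Submodule R ↥I) ≤ maximalIdeal R • ⊤ := by
      intro x _
      by_contra hx
      exact h.false ⟨x, hx⟩
    have hbot : (⊤ : Submodule R ↥I) = ⊥ :=
      Submodule.eq_bot_of_le_smul_of_le_jacobson_bot (maximalIdeal R) ⊤
        (IsNoetherian.noetherian ⊤) hall (IsLocalRing.maximalIdeal_le_jacobson ⊥)
    have : Subsingleton ↥I := by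
      constructor
      intro a b
      have ha : a ∈ (⊥ : Submodule R ↥I) := hbot ▸ Submodule.mem_top
      have hb : b ∈ (⊥ : Submodule R ↥I) := hbot ▸ Submodule.mem_top
      rw [Submodule.mem_bot] at ha hb
      rw [ha, hb]
    exact not_subsingleton_iff_nontrivial.mpr hntI this
  have hterm : ∀ x : {x : ↥I // x ∉ (maximalIdeal R • ⊤ : Submodule R ↥I)},
      mdim R (Submodule.span R {x.1}) = ringKrullDim R := by
    intro x
    have hx0 : x.1 ≠ 0 := by
      intro h0
      exact x.2 (h0 ▸ Submodule.zero_mem _)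
    have hnt : Nontrivial ↥(Submodule.span R {x.1}) :=
      Submodule.nontrivial_iff_ne_bot.mpr
        (fun h => hx0 (Submodule.span_singleton_eq_bot.mp h))
    exact mdim_eq_of_inj hcop (I.subtype ∘ₗ (Submodule.span R {x.1}).subtype)
      ((Submodule.injective_subtype I).comp
        (Submodule.injective_subtype (Submodule.span R {x.1})))
  have hldim : ldim R ↥I = ringKrullDim R := by
    rw [ldim]
    rw [iInf_congr hterm]
    exact iInf_const
  exact ⟨hldim.trans hmdimI.symm, hmdimI⟩
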